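/- Let m ≥ 1 and let A be a real symmetric m×m matrix such that every row of A sums to zero and all off-diagonal entries of A are nonnegative, and let k > 0. Then W = I − k·A is invertible, every entry of W⁻¹ is nonnegative, and every row of W⁻¹ sums to 1; consequently ‖W⁻¹‖₁ = 1, where ‖·‖₁ is the matrix norm induced by the ℓ¹ vector norm (maximum absolute column sum). -/

import Mathlib

open Matrix Finset

attribute [local instance] Matrix.linftyOpNormedRing Matrix.linftyOpNormedAlgebra

/-- If `A` is real symmetric with zero row sums and
nonnegative off-diagonal entries and `k > 0`, then `W = I − k·A` is invertible,
`W⁻¹` has nonnegative entries and unit row sums, and consequently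
`‖W⁻¹‖₁ = 1` (maximum absolute column sum). -/
theorem stmt15 (m : ℕ) (hm : 1 ≤ m) (A : Matrix (Fin m) (Fin m) ℝ)
    (hsym : A.IsSymm) (hrow : ∀ i, ∑ j, A i j = 0)
    (hoff : ∀ i j, i ≠ j → 0 ≤ A i j) (k : ℝ) (hk : 0 < k) :
    IsUnit ((1 : Matrix (Fin m) (Fin m) ℝ) - k • A) ∧
    (∀ i j, 0 ≤ ((1 : Matrix (Fin m) (Fin m) ℝ) - k • A)⁻¹ i j) ∧
    (∀ i, ∑ j, ((1 : Matrix (Fin m) (Fin m) ℝ) - k • A)⁻¹ i j = 1) ∧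
    Finset.univ.sup' (Finset.univ_nonempty_iff.mpr ⟨⟨0, by omega⟩⟩)
        (fun j : Fin m =>
          ∑ i, |((1 : Matrix (Fin m) (Fin m) ℝ) - k • A)⁻¹ i j|) = 1 := by
  haveI : Nonempty (Fin m) := ⟨⟨0, by omega⟩⟩
  haveI : CompleteSpace (Matrix (Fin m) (Fin m) ℝ) :=
    FiniteDimensional.complete ℝ (Matrix (Fin m) (Fin m) ℝ)
  set W : Matrix (Fin m) (Fin m) ℝ := 1 - k • A with hWdef
  -- diagonal entries of A are nonpositive
  have hdiag : ∀ i, A i i ≤ 0 := by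
    intro i
    have h1 : ∑ j, A i j = A i i + ∑ j ∈ univ.erase i, A i j := by
      rw [← Finset.add_sum_erase _ _ (mem_univ i)]
    have h2 : 0 ≤ ∑ j ∈ univ.erase i, A i j :=
      Finset.sum_nonneg fun j hj => hoff i j (Ne.symm (Finset.ne_of_mem_erase hj))
    have := hrow i
    linarith
  set S : ℝ := ∑ i, -A i i with hSdef
  have hS0 : 0 ≤ S := Finset.sum_nonneg fun i _ => by linarith [hdiag i]
  have hSi : ∀ i, -A i i ≤ S := fun i =>
    Finset.single_le_sum (fun j _ => neg_nonneg.mpr (hdiag j)) (mem_univ i)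
  set c : ℝ := 1 + k * S with hcdef
  have hc1 : 1 ≤ c := by nlinarith
  have hc0 : 0 < c := by linarith
  have hcne : c ≠ 0 := ne_of_gt hc0
  set B : Matrix (Fin m) (Fin m) ℝ := (c - 1) • (1 : Matrix (Fin m) (Fin m) ℝ) + k • A
    with hBdef
  have hBnn : ∀ i j, 0 ≤ B i j := by
    intro i j
    by_cases h : i = j
    · subst h
      have : B i i = (c - 1) + k * A i i := by
        simp [hBdef, Matrix.add_apply, Matrix.smul_apply, Matrix.one_apply_eq]
      rw [this]
      have := hSi i
      nlinarith
    · have : B i j = k * A i j := by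
        simp [hBdef, Matrix.add_apply, Matrix.smul_apply, Matrix.one_apply_ne h]
      rw [this]
      exact mul_nonneg hk.le (hoff i j h)
  have hone_row : ∀ i : Fin m, ∑ j, (1 : Matrix (Fin m) (Fin m) ℝ) i j = 1 := by
    intro i
    simp [Matrix.one_apply]
  have hBrow : ∀ i, ∑ j, B i j = c - 1 := by
    intro i
    simp only [hBdef, Matrix.add_apply, Matrix.smul_apply, Finset.sum_add_distrib,
      ← Finset.mul_sum, smul_eq_mul]
    rw [hrow i, hone_row i]
    ring
  set t : Matrix (Fin m) (Fin m) ℝ := c⁻¹ • B with htdef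
  have htnn : ∀ i j, 0 ≤ t i j := fun i j =>
    mul_nonneg (inv_nonneg.mpr hc0.le) (hBnn i j)
  have htrow : ∀ i, ∑ j, t i j = (c - 1) / c := by
    intro i
    simp only [htdef, Matrix.smul_apply, smul_eq_mul, ← Finset.mul_sum, hBrow i]
    rw [inv_mul_eq_div]
  -- W = c • (1 - t)
  have hWt : W = c • ((1 : Matrix (Fin m) (Fin m) ℝ) - t) := by
    have hct : c • t = B := by rw [htdef, smul_smul, mul_inv_cancel₀ hcne, one_smul]
    rw [smul_sub, hct, hBdef, hWdef]
    ext i j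
    by_cases h : i = j <;>
      simp [Matrix.sub_apply, Matrix.add_apply, Matrix.smul_apply, Matrix.one_apply, h] <;>
      ring
  -- norm of t is < 1
  have hnorm : ‖t‖ < 1 := by
    rw [Matrix.linfty_opNorm_def]
    have : ((Finset.univ : Finset (Fin m)).sup fun i : Fin m => ∑ j, ‖t i j‖₊) < 1 := by
      rw [Finset.sup_lt_iff (by norm_num : (0 : NNReal) < 1)]
      intro i _
      rw [← NNReal.coe_lt_coe]
      push_cast
      have : ∑ j, ‖t i j‖ = (c - 1) / c := by
        rw [← htrow i]
        refine Finset.sum_congr rfl fun j _ => ?_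
        rw [Real.norm_eq_abs, abs_of_nonneg (htnn i j)]
      rw [this]
      rw [div_lt_one hc0]
      linarith
    exact_mod_cast this
  -- geometric series
  have hsummable : Summable fun n : ℕ => t ^ n := summable_geometric_of_norm_lt_one hnorm
  set G : Matrix (Fin m) (Fin m) ℝ := ∑' n : ℕ, t ^ n with hGdef
  have hgeom_right : ((1 : Matrix (Fin m) (Fin m) ℝ) - t) * G = 1 :=
    mul_neg_geom_series t hnorm
  have hgeom_left : G * ((1 : Matrix (Fin m) (Fin m) ℝ) - t) = 1 :=
    geom_series_mul_neg t hnorm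
  -- W has explicit two-sided inverse c⁻¹ • G
  have hright : W * (c⁻¹ • G) = 1 := by
    rw [hWt, smul_mul_smul_comm, mul_inv_cancel₀ hcne, one_smul, hgeom_right]
  have hleft : (c⁻¹ • G) * W = 1 := by
    rw [hWt, smul_mul_smul_comm, inv_mul_cancel₀ hcne, one_smul, hgeom_left]
  have hUnit : IsUnit W := ⟨⟨W, c⁻¹ • G, hright, hleft⟩, rfl⟩
  have hinv : W⁻¹ = c⁻¹ • G := Matrix.inv_eq_right_inv hright
  -- powers of t are entrywise nonnegative
  have hpow : ∀ (n : ℕ) (i j : Fin m), 0 ≤ (t ^ n) i j := by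
    intro n
    induction n with
    | zero => intro i j; simp [Matrix.one_apply]; positivity
    | succ n ih =>
      intro i j
      rw [pow_succ, Matrix.mul_apply]
      exact Finset.sum_nonneg fun l _ => mul_nonneg (ih i l) (htnn l j)
  -- entry evaluation is a continuous linear map
  have hentry_le : ∀ (i j : Fin m) (M : Matrix (Fin m) (Fin m) ℝ), ‖M i j‖ ≤ ‖M‖ := by
    intro i j M
    rw [Matrix.linfty_opNorm_def]
    have h1 : ‖M i j‖₊ ≤ ∑ j', ‖M i j'‖₊ :=
      Finset.single_le_sum (f := fun j' => ‖M i j'‖₊) (fun _ _ => zero_le) (mem_univ j)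
    have h2 : (∑ j', ‖M i j'‖₊) ≤ (Finset.univ.sup fun i => ∑ j', ‖M i j'‖₊) :=
      Finset.le_sup (f := fun i => ∑ j', ‖M i j'‖₊) (mem_univ i)
    exact_mod_cast h1.trans h2
  have hGnn : ∀ i j, 0 ≤ G i j := by
    intro i j
    let f : Matrix (Fin m) (Fin m) ℝ →ₗ[ℝ] ℝ :=
      { toFun := fun M => M i j
        map_add' := fun _ _ => rfl
        map_smul' := fun _ _ => rfl }
    have hf : Continuous f :=
      (f.mkContinuous 1 (fun M => by rw [one_mul]; exact hentry_le i j M)).continuous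
    have hs : HasSum (fun n : ℕ => (t ^ n) i j) (G i j) := by
      have := hsummable.hasSum.map
        (f.mkContinuous 1 (fun M => by rw [one_mul]; exact hentry_le i j M)) hf
      exact this
    exact hs.nonneg fun n => hpow n i j
  have hWinvnn : ∀ i j, 0 ≤ W⁻¹ i j := by
    intro i j
    rw [hinv]
    exact mul_nonneg (inv_nonneg.mpr hc0.le) (hGnn i j)
  -- row sums of W are 1, hence row sums of W⁻¹ are 1
  have hWrow : ∀ i, ∑ j, W i j = 1 := by
    intro i
    simp only [hWdef, Matrix.sub_apply, Matrix.smul_apply, smul_eq_mul,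
      Finset.sum_sub_distrib, ← Finset.mul_sum]
    rw [hrow i, hone_row i]
    ring
  have hinvW : W⁻¹ * W = 1 := by rw [hinv]; exact hleft
  have hWinvrow : ∀ i, ∑ j, W⁻¹ i j = 1 := by
    intro i
    have h1 : W *ᵥ (fun _ => (1 : ℝ)) = fun _ => 1 := by
      funext i'
      simp only [Matrix.mulVec, dotProduct, mul_one]
      exact hWrow i'
    have h2 : W⁻¹ *ᵥ (fun _ => (1 : ℝ)) = fun _ => 1 := by
      calc W⁻¹ *ᵥ (fun _ => (1 : ℝ)) = W⁻¹ *ᵥ (W *ᵥ fun _ => (1 : ℝ)) := by rw [h1]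
        _ = (W⁻¹ * W) *ᵥ (fun _ => (1 : ℝ)) := by rw [Matrix.mulVec_mulVec]
        _ = fun _ => 1 := by rw [hinvW]; simp [Matrix.one_mulVec]
    have := congrFun h2 i
    simpa [Matrix.mulVec, dotProduct] using this
  -- symmetry of W⁻¹
  have hWsym : Wᵀ = W := by
    rw [hWdef, Matrix.transpose_sub, Matrix.transpose_one, Matrix.transpose_smul,
      hsym.eq]
  have hWinvsym : (W⁻¹)ᵀ = W⁻¹ := by
    rw [Matrix.transpose_nonsing_inv, hWsym]
  have hcol : ∀ j, ∑ i, W⁻¹ i j = 1 := by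
    intro j
    have : ∀ i, W⁻¹ i j = W⁻¹ j i := by
      intro i
      conv_lhs => rw [← hWinvsym]
      rfl
    rw [Finset.sum_congr rfl fun i _ => this i]
    exact hWinvrow j
  refine ⟨hUnit, hWinvnn, hWinvrow, ?_⟩
  have habs : ∀ j : Fin m, ∑ i, |W⁻¹ i j| = 1 := by
    intro j
    rw [Finset.sum_congr rfl fun i _ => abs_of_nonneg (hWinvnn i j)]
    exact hcol j
  rw [Finset.sup'_congr _ rfl fun j _ => habs j]
  exact Finset.sup'_const _ (1 : ℝ)
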